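/- Let S_{n,0}(x) = ∑_{k=0}^∞ ((n x)^k e^{-n x}/k!)^2. Then S_{n,0} satisfies the differential equation x S_{n,0}''(x) + (4 n x + 1) S_{n,0}'(x) + 2 n S_{n,0}(x) = 0 for x > 0. -/

import Mathlib

open Filter Finset

private def Dc (a : ℕ → ℝ) : ℕ → ℝ := fun k => ((k : ℝ) + 1) * a (k + 1)

private def Good (a : ℕ → ℝ) : Prop := ∀ r : ℝ, 0 < r → Summable fun k => |a k| * r ^ k

private lemma good_summable_pt {a : ℕ → ℝ} (ha : Good a) (x : ℝ) :
    Summable fun k => a k * x ^ k := by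
  apply Summable.of_norm_bounded (ha (|x| + 1) (by positivity))
  intro k
  rw [Real.norm_eq_abs, abs_mul, abs_pow]
  gcongr
  linarith [abs_nonneg x]

set_option maxHeartbeats 1000000 in
private lemma good_Dc {a : ℕ → ℝ} (ha : Good a) : Good (Dc a) := by
  intro r hr
  have hsum : Summable fun k => (|a (k + 1)| * (2 * r) ^ (k + 1)) / r :=
    Summable.div_const ((summable_nat_add_iff (f := fun k => |a k| * (2 * r) ^ k) 1).2
      (ha (2 * r) (by positivity))) r
  apply Summable.of_nonneg_of_le (fun k => by positivity) _ hsum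
  intro k
  have h2 : ((k : ℝ) + 1) ≤ 2 ^ (k + 1) := by exact_mod_cast (k + 1).lt_two_pow_self.le
  have habs : |Dc a k| = ((k : ℝ) + 1) * |a (k + 1)| := by
    rw [Dc, abs_mul, abs_of_nonneg (by positivity : (0:ℝ) ≤ (k : ℝ) + 1)]
  rw [habs, le_div_iff₀ hr, mul_pow]
  calc ((k : ℝ) + 1) * |a (k + 1)| * r ^ k * r
      = ((k : ℝ) + 1) * (|a (k + 1)| * r ^ (k + 1)) := by ring
    _ ≤ 2 ^ (k + 1) * (|a (k + 1)| * r ^ (k + 1)) :=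
        mul_le_mul_of_nonneg_right h2 (by positivity)
    _ = |a (k + 1)| * (2 ^ (k + 1) * r ^ (k + 1)) := by ring

private lemma good_hasDerivAt {a : ℕ → ℝ} (ha : Good a) (x : ℝ) :
    HasDerivAt (fun y => ∑' k, a k * y ^ k) (∑' k, Dc a k * x ^ k) x := by
  set R : ℝ := |x| + 1 with hRdef
  have hR : (0:ℝ) < R := by positivity
  have hxR : x ∈ Metric.ball (0 : ℝ) R := by
    simp only [Metric.mem_ball, dist_zero_right, Real.norm_eq_abs, hRdef]
    linarith [abs_nonneg x]
  set u : ℕ → ℝ := fun k => |a k| * ((k : ℝ) * R ^ (k - 1)) with hu_def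
  have hub : ∀ k : ℕ, u k ≤ (|a k| * (2 * R) ^ k) / R := by
    intro k
    rcases Nat.eq_zero_or_pos k with hk | hk
    · subst hk; simp [hu_def]; positivity
    · have h2 : (k : ℝ) ≤ 2 ^ k := by exact_mod_cast k.lt_two_pow_self.le
      have hpow : R ^ (k - 1) * R = R ^ k := by
        rw [← pow_succ, Nat.sub_add_cancel hk]
      rw [hu_def]
      simp only []
      rw [le_div_iff₀ hR, mul_pow]
      calc |a k| * ((k : ℝ) * R ^ (k - 1)) * R
          = (k : ℝ) * (|a k| * (R ^ (k - 1) * R)) := by ring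
        _ = (k : ℝ) * (|a k| * R ^ k) := by rw [hpow]
        _ ≤ 2 ^ k * (|a k| * R ^ k) := mul_le_mul_of_nonneg_right h2 (by positivity)
        _ = |a k| * (2 ^ k * R ^ k) := by ring
  have hu : Summable u :=
    Summable.of_nonneg_of_le (fun k => by positivity) hub
      (Summable.div_const (ha (2 * R) (by positivity)) R)
  have key : HasDerivAt (fun y => ∑' k, a k * y ^ k)
      (∑' k, a k * ((k : ℝ) * x ^ (k - 1))) x := by
    apply hasDerivAt_of_tendstoUniformlyOn (l := atTop) (Metric.isOpen_ball)
      (f := fun (N : ℕ) (y : ℝ) => ∑ k ∈ Finset.range N, a k * y ^ k)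
      (f' := fun (N : ℕ) (y : ℝ) => ∑ k ∈ Finset.range N, a k * ((k : ℝ) * y ^ (k - 1)))
      (hx := hxR)
    · apply tendstoUniformlyOn_tsum_nat hu
      intro k y hy
      have hy' : |y| < R := by
        simpa [Metric.mem_ball, dist_zero_right, Real.norm_eq_abs] using hy
      rw [Real.norm_eq_abs, abs_mul, abs_mul, abs_pow]
      rw [hu_def]
      simp only [Nat.abs_cast]
      gcongr
      all_goals first | exact hy'.le | positivity
    · filter_upwards with N
      intro y hy
      apply HasDerivAt.fun_sum
      intro k hk
      exact (hasDerivAt_pow k y).const_mul (a k)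
    · intro y hy
      exact (good_summable_pt ha y).hasSum.tendsto_sum_nat
  have hsum2 : Summable fun k => a k * ((k : ℝ) * x ^ (k - 1)) := by
    apply Summable.of_norm_bounded hu
    intro k
    rw [Real.norm_eq_abs, abs_mul, abs_mul, abs_pow, hu_def]
    simp only [Nat.abs_cast]
    gcongr
    all_goals first | (rw [hRdef]; linarith [abs_nonneg x]) | positivity
  have hre : (∑' k, a k * ((k : ℝ) * x ^ (k - 1))) = ∑' k, Dc a k * x ^ k := by
    rw [hsum2.tsum_eq_zero_add]
    simp only [Nat.cast_zero, zero_mul, mul_zero, zero_add, Nat.add_sub_cancel]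
    apply tsum_congr
    intro k
    rw [Dc]
    push_cast
    ring
  rwa [hre] at key

theorem stmt_4 (n : ℝ) (hn : 0 < n) :
    ∀ x : ℝ, 0 < x →
      letI S : ℝ → ℝ := fun y => ∑' k : ℕ, ((n * y) ^ k * Real.exp (-(n * y)) / (Nat.factorial k)) ^ 2
      x * deriv (deriv S) x + (4 * n * x + 1) * deriv S x + 2 * n * S x = 0 := by
  intro x hx
  set b : ℕ → ℝ := fun k => if Even k then n ^ k / ((Nat.factorial (k / 2) : ℝ)) ^ 2 else 0
    with hb_def
  -- basic values of b
  have hb_even : ∀ m : ℕ, b (2 * m) = n ^ (2 * m) / ((Nat.factorial m : ℝ)) ^ 2 := by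
    intro m
    have h2 : (2 * m) / 2 = m := by omega
    simp only [hb_def]
    rw [if_pos (even_two_mul m), h2]
  have hb_odd : ∀ m : ℕ, b (2 * m + 1) = 0 := by
    intro m
    simp only [hb_def]
    rw [if_neg]
    simp only [Nat.even_iff]
    omega
  -- b is Good
  have hb : Good b := by
    intro r hr
    apply Summable.even_add_odd
    · apply Summable.of_nonneg_of_le (fun j => by positivity) _
        (Real.summable_pow_div_factorial ((n * r) ^ 2))
      intro j
      rw [hb_even j, abs_of_nonneg (by positivity)]
      have hA : ((n * r) ^ 2) ^ j = n ^ (2 * j) * r ^ (2 * j) := by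
        rw [← pow_mul, mul_pow, pow_mul, pow_mul]
      rw [hA, div_mul_eq_mul_div]
      have h1 : (1 : ℝ) ≤ (Nat.factorial j : ℝ) := by
        exact_mod_cast Nat.one_le_iff_ne_zero.2 (Nat.factorial_ne_zero j)
      gcongr
      all_goals nlinarith [h1]
    · have hz : (fun j : ℕ => |b (2 * j + 1)| * r ^ (2 * j + 1)) = fun _ => (0 : ℝ) := by
        funext j; rw [hb_odd j]; simp
      rw [hz]
      exact summable_zero
  have hb1 : Good (Dc b) := good_Dc hb
  have hb2 : Good (Dc (Dc b)) := good_Dc hb1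
  -- key coefficient identity
  have hkey : ∀ k : ℕ, Dc (Dc b) k + Dc b (k + 1) = 4 * n ^ 2 * b k := by
    intro k
    rcases Nat.even_or_odd k with he | ho
    · obtain ⟨m, rfl⟩ := he
      have hk2 : m + m = 2 * m := by ring
      have e0 : b (m + m) = n ^ (2 * m) / ((Nat.factorial m : ℝ)) ^ 2 := by
        rw [hk2, hb_even]
      have e2 : b (m + m + 2) = n ^ (2 * (m + 1)) / ((Nat.factorial (m + 1) : ℝ)) ^ 2 := by
        have : m + m + 2 = 2 * (m + 1) := by ring
        rw [this, hb_even]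
      simp only [Dc]
      have hfact : ((Nat.factorial (m + 1) : ℝ)) = ((m : ℝ) + 1) * (Nat.factorial m : ℝ) := by
        rw [Nat.factorial_succ]; push_cast; ring
      have hm1 : m + m + 1 + 1 = m + m + 2 := by ring
      rw [hm1, e2, e0, hfact]
      have hF : (0 : ℝ) < (Nat.factorial m : ℝ) := by
        exact_mod_cast Nat.factorial_pos m
      have hM : (0 : ℝ) < (m : ℝ) + 1 := by positivity
      field_simp
      push_cast
      ring
    · obtain ⟨m, rfl⟩ := ho
      have h1 : b (2 * m + 1) = 0 := hb_odd m
      have h3 : b (2 * m + 1 + 2) = 0 := by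
        have : 2 * m + 1 + 2 = 2 * (m + 1) + 1 := by ring
        rw [this, hb_odd]
      simp only [Dc]
      have hm1 : 2 * m + 1 + 1 + 1 = 2 * m + 1 + 2 := by ring
      rw [hm1, h1, h3]
      ring
  -- the auxiliary functions
  set H : ℝ → ℝ := fun y => ∑' k, b k * y ^ k with hH_def
  set H1 : ℝ → ℝ := fun y => ∑' k, Dc b k * y ^ k with hH1_def
  set H2 : ℝ → ℝ := fun y => ∑' k, Dc (Dc b) k * y ^ k with hH2_def
  have hH : ∀ y : ℝ, HasDerivAt H (H1 y) y := fun y => good_hasDerivAt hb y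
  have hH1 : ∀ y : ℝ, HasDerivAt H1 (H2 y) y := fun y => good_hasDerivAt hb1 y
  -- rewriting S
  have hSeq : (fun y : ℝ => ∑' k : ℕ,
        ((n * y) ^ k * Real.exp (-(n * y)) / (Nat.factorial k : ℝ)) ^ 2)
      = fun y => Real.exp (-(2 * n * y)) * H y := by
    funext y
    have hterm : ∀ k : ℕ, ((n * y) ^ k * Real.exp (-(n * y)) / (Nat.factorial k : ℝ)) ^ 2
        = Real.exp (-(2 * n * y)) * ((n * y) ^ (2 * k) / ((Nat.factorial k : ℝ)) ^ 2) := by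
      intro k
      have hexp : Real.exp (-(n * y)) ^ 2 = Real.exp (-(2 * n * y)) := by
        rw [sq, ← Real.exp_add]; ring_nf
      have hpow : ((n * y) ^ k) ^ 2 = (n * y) ^ (2 * k) := by
        rw [← pow_mul]; ring_nf
      field_simp
      rw [hexp, hpow]
      ring_nf
    have hsum_even : Summable fun j : ℕ => b (2 * j) * y ^ (2 * j) := by
      apply Summable.of_norm_bounded (Real.summable_pow_div_factorial ((n * |y|) ^ 2))
      intro j
      rw [hb_even j]
      simp only [Real.norm_eq_abs, abs_mul, abs_div, abs_pow, abs_of_nonneg hn.le, Nat.abs_cast]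
      have hA : ((n * |y|) ^ 2) ^ j = n ^ (2 * j) * |y| ^ (2 * j) := by
        rw [← pow_mul, mul_pow, pow_mul, pow_mul]
      rw [hA, div_mul_eq_mul_div]
      have h1 : (1 : ℝ) ≤ (Nat.factorial j : ℝ) := by
        exact_mod_cast Nat.one_le_iff_ne_zero.2 (Nat.factorial_ne_zero j)
      gcongr
      all_goals nlinarith [h1]
    have hzfun : (fun j : ℕ => b (2 * j + 1) * y ^ (2 * j + 1)) = fun _ => (0 : ℝ) := by
      funext j; rw [hb_odd j]; ring
    have hsum_odd : Summable fun j : ℕ => b (2 * j + 1) * y ^ (2 * j + 1) := by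
      rw [hzfun]; exact summable_zero
    have hHy : H y = ∑' j : ℕ, b (2 * j) * y ^ (2 * j) := by
      simp only [hH_def]
      rw [← tsum_even_add_odd (f := fun k : ℕ => b k * y ^ k) hsum_even hsum_odd]
      have hodd0 : (∑' j : ℕ, b (2 * j + 1) * y ^ (2 * j + 1)) = 0 := by
        rw [hzfun]; exact tsum_zero
      rw [hodd0, add_zero]
    calc (∑' k : ℕ, ((n * y) ^ k * Real.exp (-(n * y)) / (Nat.factorial k : ℝ)) ^ 2)
        = ∑' k : ℕ, Real.exp (-(2 * n * y)) * ((n * y) ^ (2 * k) / ((Nat.factorial k : ℝ)) ^ 2) :=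
          tsum_congr hterm
      _ = Real.exp (-(2 * n * y)) * ∑' k : ℕ, (n * y) ^ (2 * k) / ((Nat.factorial k : ℝ)) ^ 2 :=
          tsum_mul_left
      _ = Real.exp (-(2 * n * y)) * H y := by
          rw [hHy]
          congr 1
          apply tsum_congr
          intro j
          rw [hb_even j, mul_pow]
          ring
  -- basic summabilities at x
  have s0 : Summable fun k => b k * x ^ k := good_summable_pt hb x
  have s1 : Summable fun k => Dc b k * x ^ k := good_summable_pt hb1 x
  have s2 : Summable fun k => Dc (Dc b) k * x ^ k := good_summable_pt hb2 x
  have t2 : Summable fun k => Dc (Dc b) k * x ^ (k + 1) := by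
    apply Summable.congr (s2.mul_right x)
    intro k; rw [pow_succ]; ring
  have t1 : Summable fun k => Dc b (k + 1) * x ^ (k + 1) :=
    (summable_nat_add_iff (f := fun k => Dc b k * x ^ k) 1).2 s1
  have t0 : Summable fun k => (4 * n ^ 2 * b k) * x ^ (k + 1) := by
    apply Summable.congr ((s0.mul_right x).mul_left (4 * n ^ 2))
    intro k; rw [pow_succ]; ring
  have hb1z : b 1 = 0 := by simpa using hb_odd 0
  -- key identity
  have KI : x * H2 x + H1 x - 4 * n ^ 2 * (x * H x) = 0 := by
    have e2 : x * H2 x = ∑' k : ℕ, Dc (Dc b) k * x ^ (k + 1) := by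
      simp only [hH2_def]
      rw [← tsum_mul_left]
      exact tsum_congr fun k => by rw [pow_succ]; ring
    have e1 : H1 x = ∑' k : ℕ, Dc b (k + 1) * x ^ (k + 1) := by
      simp only [hH1_def]
      rw [s1.tsum_eq_zero_add]
      have hz : Dc b 0 * x ^ 0 = 0 := by simp [Dc, hb1z]
      rw [hz, zero_add]
    have e0 : 4 * n ^ 2 * (x * H x) = ∑' k : ℕ, (4 * n ^ 2 * b k) * x ^ (k + 1) := by
      simp only [hH_def]
      rw [← tsum_mul_left, ← tsum_mul_left]
      exact tsum_congr fun k => by rw [pow_succ]; ring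
    rw [e2, e1, e0, ← t2.tsum_add t1, ← (t2.add t1).tsum_sub t0]
    have hz : ∀ k : ℕ,
        (Dc (Dc b) k * x ^ (k + 1) + Dc b (k + 1) * x ^ (k + 1)) - (4 * n ^ 2 * b k) * x ^ (k + 1)
          = 0 := by
      intro k
      have h := hkey k
      linear_combination x ^ (k + 1) * h
    calc (∑' k : ℕ, ((Dc (Dc b) k * x ^ (k + 1) + Dc b (k + 1) * x ^ (k + 1))
            - (4 * n ^ 2 * b k) * x ^ (k + 1)))
        = ∑' _ : ℕ, (0 : ℝ) := tsum_congr hz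
      _ = 0 := tsum_zero
  -- derivative machinery
  have hE : ∀ y : ℝ, HasDerivAt (fun z : ℝ => Real.exp (-(2 * n * z)))
      (Real.exp (-(2 * n * y)) * (-(2 * n))) y := by
    intro y
    have h1 : HasDerivAt (fun z : ℝ => -(2 * n * z)) (-(2 * n)) y := by
      exact (((hasDerivAt_id y).const_mul (2 * n)).neg).congr_deriv (by ring)
    exact h1.exp
  have hS' : ∀ y : ℝ, HasDerivAt (fun z : ℝ => Real.exp (-(2 * n * z)) * H z)
      (Real.exp (-(2 * n * y)) * (H1 y - 2 * n * H y)) y := by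
    intro y
    have h := (hE y).mul (hH y)
    exact h.congr_deriv (by ring)
  have hderiv1 : deriv (fun z : ℝ => Real.exp (-(2 * n * z)) * H z)
      = fun y : ℝ => Real.exp (-(2 * n * y)) * (H1 y - 2 * n * H y) :=
    funext fun y => (hS' y).deriv
  have hS'' : HasDerivAt (fun y : ℝ => Real.exp (-(2 * n * y)) * (H1 y - 2 * n * H y))
      (Real.exp (-(2 * n * x)) * (H2 x - 4 * n * H1 x + 4 * n ^ 2 * H x)) x := by
    have h := (hE x).mul ((hH1 x).sub ((hH x).const_mul (2 * n)))
    exact h.congr_deriv (by simp only [Pi.sub_apply]; ring)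
  -- final computation
  show x * deriv (deriv (fun y : ℝ => ∑' k : ℕ,
        ((n * y) ^ k * Real.exp (-(n * y)) / (Nat.factorial k : ℝ)) ^ 2)) x
      + (4 * n * x + 1) * deriv (fun y : ℝ => ∑' k : ℕ,
        ((n * y) ^ k * Real.exp (-(n * y)) / (Nat.factorial k : ℝ)) ^ 2) x
      + 2 * n * ((fun y : ℝ => ∑' k : ℕ,
        ((n * y) ^ k * Real.exp (-(n * y)) / (Nat.factorial k : ℝ)) ^ 2) x) = 0
  rw [hSeq, hderiv1, hS''.deriv]
  beta_reduce
  linear_combination Real.exp (-(2 * n * x)) * KI
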